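/- Let Y be a locally finite directed graph and let a locally profinite group G act properly on Y. Under the isomorphism between H(Y,ℂ) and the algebraic dual of H_c^1(Y,ℂ) given by f ↦ (ω + dC_c^0(Y,ℂ) ↦ ⟨f, ω⟩), a harmonic form f ∈ H(Y,ℂ) corresponds to a smooth linear form (one with open stabilizer under the dual G-action) if and only if f has open stabilizer in G; consequently this isomorphism restricts to a G-equivariant isomorphism between the space H_∞(Y,ℂ) of smooth harmonic forms and the contragredient of H_c^1(Y,ℂ). -/

import Mathlib

open Function

/-- A directed graph: vertices, edges, head and tail maps. -/
structure DiGraph where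
  V : Type
  E : Type
  head : E → V
  tail : E → V

namespace DiGraph

/-- A directed graph is locally finite if every vertex belongs to finitely many edges. -/
def LocallyFinite (Y : DiGraph) : Prop :=
  ∀ s : Y.V, {a : Y.E | Y.head a = s ∨ Y.tail a = s}.Finite

/-- The coboundary `df` of a `0`-cochain `f`: `df(a) = f(a⁺) - f(a⁻)`. -/
def cobound (Y : DiGraph) (f : Y.V → ℂ) : Y.E → ℂ :=
  fun a => f (Y.head a) - f (Y.tail a)

/-- The map `d* : C¹(Y,ℂ) → C⁰(Y,ℂ)`,
`d*f(s) = Σ_{a : a⁺ = s} f(a) - Σ_{a : a⁻ = s} f(a)`. -/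
noncomputable def dstar (Y : DiGraph) (f : Y.E → ℂ) : Y.V → ℂ :=
  fun s => (∑ᶠ a ∈ {a : Y.E | Y.head a = s}, f a) - ∑ᶠ a ∈ {a : Y.E | Y.tail a = s}, f a

/-- The pairing `⟨f, g⟩ = Σ_x f(x) g(x)`. -/
noncomputable def pairing {α : Type} (f g : α → ℂ) : ℂ := ∑ᶠ x, f x * g x

/-- Finitely supported complex valued functions on `α`, as a subspace of all functions. -/
noncomputable def CcSub (α : Type) : Submodule ℂ (α → ℂ) where
  carrier := {f | (support f).Finite}
  add_mem' := fun hf hg => Set.Finite.subset (hf.union hg) (support_add _ _)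
  zero_mem' := by simp
  smul_mem' := fun c f hf => Set.Finite.subset hf (support_const_smul_subset c f)

/-- The coboundary, as a linear map on finitely supported cochains (this uses
local finiteness of the graph). -/
noncomputable def dcc (Y : DiGraph) (hY : Y.LocallyFinite) :
    CcSub Y.V →ₗ[ℂ] CcSub Y.E where
  toFun f := ⟨Y.cobound f.1, by
    have hsub : support (Y.cobound f.1) ⊆
        ⋃ s ∈ support f.1, {a : Y.E | Y.head a = s ∨ Y.tail a = s} := by
      intro a ha
      by_cases h : f.1 (Y.head a) = 0
      · have h' : f.1 (Y.tail a) ≠ 0 := by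
          intro h''
          exact ha (by simp [cobound, h, h''])
        exact Set.mem_biUnion h' (Or.inr rfl)
      · exact Set.mem_biUnion h (Or.inl rfl)
    exact Set.Finite.subset (Set.Finite.biUnion f.2 (fun s _ => hY s)) hsub⟩
  map_add' f g := by
    apply Subtype.ext
    funext a
    simp [cobound]
    ring
  map_smul' c f := by
    apply Subtype.ext
    funext a
    simp [cobound]
    ring

/-- The first cohomology space with compact support of the graph, defined as
finitely supported 1-cochains modulo coboundaries of finitely supported 0-cochains. -/
noncomputable abbrev Hc1 (Y : DiGraph) (hY : Y.LocallyFinite) :=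
  ↥(CcSub Y.E) ⧸ LinearMap.range (Y.dcc hY)

/-- The space of harmonic forms `ker d*`. -/
noncomputable def HarmSub (Y : DiGraph) (hY : Y.LocallyFinite) : Submodule ℂ (Y.E → ℂ) where
  carrier := {f | ∀ s, Y.dstar f s = 0}
  zero_mem' := by
    intro s
    simp [dstar]
  add_mem' := by
    intro f g hf hg s
    have h1 : {a : Y.E | Y.head a = s}.Finite := (hY s).subset (fun a ha => Or.inl ha)
    have h2 : {a : Y.E | Y.tail a = s}.Finite := (hY s).subset (fun a ha => Or.inr ha)
    have hf' := hf s
    have hg' := hg s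
    simp only [dstar, Pi.add_apply] at hf' hg' ⊢
    rw [finsum_mem_add_distrib h1, finsum_mem_add_distrib h2]
    linear_combination hf' + hg'
  smul_mem' := by
    intro c f hf s
    have h1 : {a : Y.E | Y.head a = s}.Finite := (hY s).subset (fun a ha => Or.inl ha)
    have h2 : {a : Y.E | Y.tail a = s}.Finite := (hY s).subset (fun a ha => Or.inr ha)
    have hf' := hf s
    simp only [dstar, Pi.smul_apply, smul_eq_mul] at hf' ⊢
    rw [finsum_mem_eq_finite_toFinset_sum _ h1, finsum_mem_eq_finite_toFinset_sum _ h2]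
      at hf' ⊢
    rw [← Finset.mul_sum, ← Finset.mul_sum]
    linear_combination c * hf'

/-- The natural action of a group element `g` on finitely supported `1`-cochains,
`(g • ω)(a) = ω(g⁻¹ • a)`, for a group acting on the edges of the graph. -/
noncomputable def ccAct {Y : DiGraph} {G : Type} [Group G] (actE : G →* Equiv.Perm Y.E)
    (g : G) (ω : ↥(CcSub Y.E)) : ↥(CcSub Y.E) :=
  ⟨fun a => ω.1 (actE g⁻¹ a), by
    show (support (fun a => ω.1 (actE g⁻¹ a))).Finite
    have h : support (fun a => ω.1 (actE g⁻¹ a)) = (actE g⁻¹) ⁻¹' support ω.1 :=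
      Function.support_comp_eq_preimage (ω.1) (actE g⁻¹)
    rw [h]
    exact ω.2.preimage (Equiv.injective _).injOn⟩

section Aux

open scoped Classical

variable {α β : Type}

/-- The delta function at `a`, as a finitely supported function. -/
noncomputable def deltaCc (a : α) : ↥(CcSub α) :=
  ⟨fun x => if x = a then (1 : ℂ) else 0,
    (Set.finite_singleton a).subset (fun x hx => by
      simp only [Set.mem_singleton_iff]
      by_contra h
      exact hx (if_neg h))⟩

lemma pairing_support_subset (f g : α → ℂ) :
    support (fun x => f x * g x) ⊆ support g := fun x hx h => hx (by simp [h])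

lemma pairing_support_subset' (f g : α → ℂ) :
    support (fun x => f x * g x) ⊆ support f := fun x hx h => hx (by simp [h])

lemma pairing_delta (f : α → ℂ) (a : α) : pairing f ((deltaCc a : ↥(CcSub α)) : α → ℂ) = f a := by
  unfold pairing
  rw [finsum_eq_single _ a]
  · simp [deltaCc]
  · intro x hx
    simp [deltaCc, if_neg hx]

lemma pairing_add_left (f g ω : α → ℂ) (hω : (support ω).Finite) :
    pairing (f + g) ω = pairing f ω + pairing g ω := by
  unfold pairing
  rw [← finsum_add_distrib (hω.subset (pairing_support_subset f ω))
    (hω.subset (pairing_support_subset g ω))]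
  apply finsum_congr
  intro x
  simp [mul_comm]
  ring

lemma pairing_smul_left (c : ℂ) (f ω : α → ℂ) (hω : (support ω).Finite) :
    pairing (c • f) ω = c * pairing f ω := by
  unfold pairing
  rw [mul_finsum _ c]
  apply finsum_congr
  intro x
  simp
  ring

/-- Summation grouped along the fibers of a map with finite fibers. -/
lemma finsum_mul_comp (f : α → ℂ) (φ : β → ℂ) (hφ : (support φ).Finite)
    (h : α → β) (hfib : ∀ s, {a | h a = s}.Finite) :
    ∑ᶠ a, f a * φ (h a) = ∑ᶠ s, (∑ᶠ a ∈ {a | h a = s}, f a) * φ s := by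
  set T : Finset α := hφ.toFinset.biUnion (fun s => (hfib s).toFinset) with hT
  have hL : ∑ᶠ a, f a * φ (h a) = ∑ a ∈ T, f a * φ (h a) := by
    apply finsum_eq_finset_sum_of_support_subset
    intro a ha
    have hφa : φ (h a) ≠ 0 := fun h0 => ha (by simp [h0])
    simp only [hT, Finset.coe_biUnion, Set.mem_iUnion, Finset.mem_coe, Finset.mem_biUnion,
      Set.Finite.mem_toFinset]
    exact ⟨h a, hφa, by simp⟩
  have hR : ∑ᶠ s, (∑ᶠ a ∈ {a | h a = s}, f a) * φ s
      = ∑ s ∈ hφ.toFinset, (∑ᶠ a ∈ {a | h a = s}, f a) * φ s := by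
    apply finsum_eq_finset_sum_of_support_subset
    intro s hs
    have : φ s ≠ 0 := fun h0 => hs (by simp [h0])
    simpa using this
  rw [hL, hR, Finset.sum_biUnion]
  · apply Finset.sum_congr rfl
    intro s _
    rw [finsum_mem_eq_finite_toFinset_sum _ (hfib s), Finset.sum_mul]
    apply Finset.sum_congr rfl
    intro a ha
    have := (hfib s).mem_toFinset.mp ha
    rw [Set.mem_setOf_eq] at this
    rw [this]
  · intro s _ t _ hst
    simp only [Finset.disjoint_left]
    intro a has hat
    exact hst (by
      rw [← (Set.Finite.mem_toFinset _).mp has, ← (Set.Finite.mem_toFinset _).mp hat])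

/-- Adjointness between the coboundary and `d*`. -/
lemma pairing_cobound (Y : DiGraph) (hY : Y.LocallyFinite) (f : Y.E → ℂ)
    (φ : ↥(CcSub Y.V)) :
    pairing f (Y.cobound (φ : Y.V → ℂ)) = ∑ᶠ s, Y.dstar f s * (φ : Y.V → ℂ) s := by
  have hhf : ∀ s, {a : Y.E | Y.head a = s}.Finite :=
    fun s => (hY s).subset fun a ha => Or.inl ha
  have htf : ∀ s, {a : Y.E | Y.tail a = s}.Finite :=
    fun s => (hY s).subset fun a ha => Or.inr ha
  have h1 : (support fun a => f a * (φ : Y.V → ℂ) (Y.head a)).Finite := by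
    apply Set.Finite.subset (Set.Finite.biUnion φ.2 fun s _ => hhf s)
    intro a ha
    have : (φ : Y.V → ℂ) (Y.head a) ≠ 0 := fun h0 => ha (by simp [h0])
    exact Set.mem_biUnion this rfl
  have h2 : (support fun a => f a * (φ : Y.V → ℂ) (Y.tail a)).Finite := by
    apply Set.Finite.subset (Set.Finite.biUnion φ.2 fun s _ => htf s)
    intro a ha
    have : (φ : Y.V → ℂ) (Y.tail a) ≠ 0 := fun h0 => ha (by simp [h0])
    exact Set.mem_biUnion this rfl
  have key : pairing f (Y.cobound (φ : Y.V → ℂ))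
      = (∑ᶠ a, f a * (φ : Y.V → ℂ) (Y.head a)) - ∑ᶠ a, f a * (φ : Y.V → ℂ) (Y.tail a) := by
    unfold pairing cobound
    rw [← finsum_sub_distrib h1 h2]
    apply finsum_congr
    intro a
    ring
  rw [key, finsum_mul_comp f _ φ.2 Y.head hhf, finsum_mul_comp f _ φ.2 Y.tail htf,
    ← finsum_sub_distrib
      (φ.2.subset (pairing_support_subset _ (φ : Y.V → ℂ)))
      (φ.2.subset (pairing_support_subset _ (φ : Y.V → ℂ)))]
  apply finsum_congr
  intro s
  unfold dstar
  ring

/-- Every finitely supported function is a finite combination of delta functions. -/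
lemma cc_eq_sum (ω : ↥(CcSub α)) :
    ω = ∑ a ∈ ω.2.toFinset, (ω : α → ℂ) a • deltaCc a := by
  apply Subtype.ext
  funext x
  rw [AddSubmonoidClass.coe_finset_sum, Finset.sum_apply]
  simp only [SetLike.val_smul, Pi.smul_apply, smul_eq_mul, deltaCc]
  rw [Finset.sum_congr rfl (fun a _ => by rw [mul_ite, mul_one, mul_zero]),
    Finset.sum_ite_eq]
  by_cases hx : x ∈ ω.2.toFinset
  · rw [if_pos hx]
  · rw [if_neg hx]
    have : x ∉ support (ω : α → ℂ) := fun h => hx ((Set.Finite.mem_toFinset _).mpr h)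
    simpa using this

/-- Change of variables by a permutation in the pairing. -/
lemma pairing_perm (f ω : α → ℂ) (e : Equiv.Perm α) :
    pairing f (fun x => ω (e x)) = pairing (fun x => f (e.symm x)) ω := by
  unfold pairing
  rw [← finsum_comp_equiv e.symm (f := fun x => f x * ω (e x))]
  apply finsum_congr
  intro x
  simp

/-- The pairing with a fixed `f`, as a linear map on finitely supported functions. -/
noncomputable def pairL (f : α → ℂ) : ↥(CcSub α) →ₗ[ℂ] ℂ where
  toFun ω := pairing f (ω : α → ℂ)
  map_add' ω η := by
    unfold pairing
    rw [← finsum_add_distrib (ω.2.subset (pairing_support_subset f _))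
      (η.2.subset (pairing_support_subset f _))]
    apply finsum_congr
    intro x
    show f x * ((ω : α → ℂ) x + (η : α → ℂ) x) = _
    ring
  map_smul' c ω := by
    unfold pairing
    simp only [RingHom.id_apply, smul_eq_mul]
    rw [mul_finsum _ c]
    apply finsum_congr
    intro x
    show f x * (c * (ω : α → ℂ) x) = c * (f x * (ω : α → ℂ) x)
    ring

/-- Sum of deltas over a fiber. -/
lemma sum_delta_fiber (h : α → β) (s : β) (hfin : {a | h a = s}.Finite) (b : α) :
    (∑ a ∈ hfin.toFinset, ((deltaCc a : ↥(CcSub α)) : α → ℂ) b) = if h b = s then 1 else 0 := by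
  have hd : ∀ a : α, ((deltaCc a : ↥(CcSub α)) : α → ℂ) b = if b = a then 1 else 0 :=
    fun a => rfl
  rw [Finset.sum_congr rfl (fun a _ => hd a), Finset.sum_ite_eq]
  by_cases hb : h b = s
  · rw [if_pos (hfin.mem_toFinset.mpr hb), if_pos hb]
  · rw [if_neg (fun hc => hb (by simpa using hfin.mem_toFinset.mp hc)), if_neg hb]

end Aux

/-- The isomorphism `f ↦ (ω + dC_c⁰ ↦ ⟨f, ω⟩)` from harmonic forms to the dual of `Hc¹`. -/
noncomputable def Phi (Y : DiGraph) (hY : Y.LocallyFinite) :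
    ↥(Y.HarmSub hY) →ₗ[ℂ] Module.Dual ℂ (Y.Hc1 hY) where
  toFun f := Submodule.liftQ _ (pairL (f : Y.E → ℂ)) (by
    rintro x hx
    obtain ⟨φ, rfl⟩ := hx
    rw [LinearMap.mem_ker]
    show pairing (f : Y.E → ℂ) (Y.cobound (φ : Y.V → ℂ)) = 0
    rw [pairing_cobound Y hY _ φ]
    have hf : ∀ s, Y.dstar (f : Y.E → ℂ) s = 0 := f.2
    simp [hf])
  map_add' f g := by
    apply Submodule.linearMap_qext
    ext ω
    show pairing ((f + g : ↥(Y.HarmSub hY)) : Y.E → ℂ) (ω : Y.E → ℂ)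
      = pairing (f : Y.E → ℂ) (ω : Y.E → ℂ) + pairing (g : Y.E → ℂ) (ω : Y.E → ℂ)
    rw [Submodule.coe_add, pairing_add_left _ _ _ ω.2]
  map_smul' c f := by
    apply Submodule.linearMap_qext
    ext ω
    show pairing ((c • f : ↥(Y.HarmSub hY)) : Y.E → ℂ) (ω : Y.E → ℂ)
      = c * pairing (f : Y.E → ℂ) (ω : Y.E → ℂ)
    rw [Submodule.coe_smul, pairing_smul_left _ _ _ ω.2]

lemma Phi_mk (Y : DiGraph) (hY : Y.LocallyFinite) (f : ↥(Y.HarmSub hY))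
    (ω : ↥(CcSub Y.E)) :
    Phi Y hY f (Submodule.Quotient.mk ω) = pairing (f : Y.E → ℂ) (ω : Y.E → ℂ) :=
  Submodule.liftQ_apply _ _ ω

/-- Let `Y` be a locally finite directed graph and let a locally
profinite group `G` act properly on `Y` (preserving heads and tails of edges).
Under the isomorphism `Φ` between `H(Y,ℂ)` and the algebraic dual of `H_c¹(Y,ℂ)`
given by `f ↦ (ω + dC_c⁰ ↦ ⟨f, ω⟩)`, a harmonic form `f` corresponds to a smooth
linear form (one whose stabilizer under the dual `G`-action, `(g·λ)(w) = λ(g⁻¹·w)`,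
is open) if and only if `f` has open stabilizer in `G` (under the action
`(g·f)(a) = f(g⁻¹·a)`); consequently `Φ` restricts to a `G`-equivariant isomorphism
between the space of smooth harmonic forms and the contragredient of `H_c¹(Y,ℂ)`. -/
theorem harmonic_smooth_iff_dual_smooth (Y : DiGraph) (hY : Y.LocallyFinite)
    (G : Type) [Group G] [TopologicalSpace G] [IsTopologicalGroup G]
    [LocallyCompactSpace G] [T2Space G] [TotallyDisconnectedSpace G]
    (actV : G →* Equiv.Perm Y.V) (actE : G →* Equiv.Perm Y.E)
    (hhead : ∀ (g : G) (a : Y.E), Y.head (actE g a) = actV g (Y.head a))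
    (htail : ∀ (g : G) (a : Y.E), Y.tail (actE g a) = actV g (Y.tail a))
    (hproper : ∀ s : Y.V,
      IsOpen {g : G | actV g s = s} ∧ IsCompact {g : G | actV g s = s}) :
    ∃ Φ : ↥(Y.HarmSub hY) →ₗ[ℂ] Module.Dual ℂ (Y.Hc1 hY),
      (∀ (f : ↥(Y.HarmSub hY)) (ω : ↥(DiGraph.CcSub Y.E)),
        Φ f (Submodule.Quotient.mk ω) = DiGraph.pairing (f : Y.E → ℂ) (ω : Y.E → ℂ)) ∧
      Function.Bijective Φ ∧
      -- `Φ` is `G`-equivariant: `Φ (g·f) = g·(Φ f)` for the dual action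
      (∀ (g : G) (f : ↥(Y.HarmSub hY)) (f' : ↥(Y.HarmSub hY)),
        (∀ a : Y.E, (f' : Y.E → ℂ) a = (f : Y.E → ℂ) (actE g⁻¹ a)) →
          ∀ ω : ↥(DiGraph.CcSub Y.E),
            Φ f' (Submodule.Quotient.mk ω)
              = Φ f (Submodule.Quotient.mk (ccAct actE g⁻¹ ω))) ∧
      -- `f` is smooth iff the corresponding linear form is smooth
      (∀ f : ↥(Y.HarmSub hY),
        IsOpen {g : G | ∀ a : Y.E, (f : Y.E → ℂ) (actE g⁻¹ a) = (f : Y.E → ℂ) a} ↔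
        IsOpen {g : G | ∀ ω : ↥(DiGraph.CcSub Y.E),
          Φ f (Submodule.Quotient.mk (ccAct actE g⁻¹ ω))
            = Φ f (Submodule.Quotient.mk ω)}) := by
  classical
  have hspec := Phi_mk Y hY
  have hccact : ∀ (g : G) (ω : ↥(CcSub Y.E)),
      ((ccAct actE g⁻¹ ω : ↥(CcSub Y.E)) : Y.E → ℂ)
        = fun x => (ω : Y.E → ℂ) (actE g x) := by
    intro g ω
    funext x
    show (ω : Y.E → ℂ) (actE (g⁻¹)⁻¹ x) = (ω : Y.E → ℂ) (actE g x)
    rw [inv_inv]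
  have hsymm : ∀ (g : G) (x : Y.E), (actE g).symm x = actE g⁻¹ x := by
    intro g x
    rw [map_inv]
    rfl
  refine ⟨Phi Y hY, hspec, ⟨?_, ?_⟩, ?_, ?_⟩
  · -- injectivity
    intro f g h
    apply Subtype.ext
    funext a
    have h1 := hspec f (deltaCc a)
    have h2 := hspec g (deltaCc a)
    rw [pairing_delta] at h1 h2
    rw [← h1, ← h2, h]
  · -- surjectivity
    intro lam
    set L : ↥(CcSub Y.E) →ₗ[ℂ] ℂ := lam.comp (LinearMap.range (Y.dcc hY)).mkQ with hLdef
    set F : Y.E → ℂ := fun a => L (deltaCc a) with hFdef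
    have hhf : ∀ s, {a : Y.E | Y.head a = s}.Finite :=
      fun s => (hY s).subset fun a ha => Or.inl ha
    have htf : ∀ s, {a : Y.E | Y.tail a = s}.Finite :=
      fun s => (hY s).subset fun a ha => Or.inr ha
    have hFh : F ∈ Y.HarmSub hY := by
      intro s
      show (∑ᶠ a ∈ {a : Y.E | Y.head a = s}, F a)
          - (∑ᶠ a ∈ {a : Y.E | Y.tail a = s}, F a) = 0
      rw [finsum_mem_eq_finite_toFinset_sum _ (hhf s),
        finsum_mem_eq_finite_toFinset_sum _ (htf s)]
      have key : ((∑ a ∈ (hhf s).toFinset, deltaCc a)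
          - ∑ a ∈ (htf s).toFinset, deltaCc a : ↥(CcSub Y.E))
          = Y.dcc hY (deltaCc s) := by
        apply Subtype.ext
        funext b
        rw [AddSubgroupClass.coe_sub, Pi.sub_apply,
          AddSubmonoidClass.coe_finset_sum, AddSubmonoidClass.coe_finset_sum,
          Finset.sum_apply, Finset.sum_apply,
          sum_delta_fiber Y.head s (hhf s) b, sum_delta_fiber Y.tail s (htf s) b]
        rfl
      have hsum : (∑ a ∈ (hhf s).toFinset, F a) - (∑ a ∈ (htf s).toFinset, F a)
          = L ((∑ a ∈ (hhf s).toFinset, deltaCc a)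
              - ∑ a ∈ (htf s).toFinset, deltaCc a) := by
        rw [map_sub, map_sum, map_sum]
      rw [hsum, key]
      show lam ((LinearMap.range (Y.dcc hY)).mkQ (Y.dcc hY (deltaCc s))) = 0
      rw [Submodule.mkQ_apply,
        (Submodule.Quotient.mk_eq_zero _).mpr (LinearMap.mem_range_self _ _), map_zero]
    refine ⟨⟨F, hFh⟩, ?_⟩
    apply Submodule.linearMap_qext
    ext ω
    show Phi Y hY ⟨F, hFh⟩ (Submodule.Quotient.mk ω) = lam (Submodule.Quotient.mk ω)
    rw [hspec]
    calc pairing F (ω : Y.E → ℂ)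
        = ∑ x ∈ ω.2.toFinset, F x * (ω : Y.E → ℂ) x :=
          finsum_eq_finset_sum_of_support_subset _ (by
            intro x hx
            exact Finset.mem_coe.mpr ((Set.Finite.mem_toFinset _).mpr (pairing_support_subset F _ hx)))
      _ = ∑ x ∈ ω.2.toFinset, L ((ω : Y.E → ℂ) x • deltaCc x) := by
          apply Finset.sum_congr rfl
          intro x _
          rw [map_smul, smul_eq_mul]
          ring
      _ = L (∑ x ∈ ω.2.toFinset, (ω : Y.E → ℂ) x • deltaCc x) := (map_sum L _ _).symm
      _ = L ω := by rw [← cc_eq_sum ω]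
      _ = lam (Submodule.Quotient.mk ω) := rfl
  · -- equivariance
    intro g f f' hf' ω
    rw [hspec f' ω, hspec f (ccAct actE g⁻¹ ω), hccact g ω, pairing_perm _ _ (actE g)]
    congr 1
    funext x
    rw [hf' x, hsymm g x]
  · -- smoothness
    intro f
    have hsets : {g : G | ∀ a : Y.E, (f : Y.E → ℂ) (actE g⁻¹ a) = (f : Y.E → ℂ) a}
        = {g : G | ∀ ω : ↥(CcSub Y.E),
            Phi Y hY f (Submodule.Quotient.mk (ccAct actE g⁻¹ ω))
              = Phi Y hY f (Submodule.Quotient.mk ω)} := by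
      ext g
      simp only [Set.mem_setOf_eq]
      constructor
      · intro h ω
        rw [hspec f (ccAct actE g⁻¹ ω), hspec f ω, hccact g ω, pairing_perm _ _ (actE g)]
        congr 1
        funext x
        rw [hsymm g x, h x]
      · intro h a
        have hh := h (deltaCc a)
        rw [hspec f (ccAct actE g⁻¹ (deltaCc a)), hspec f (deltaCc a), pairing_delta] at hh
        rw [← hh, hccact g (deltaCc a), pairing_perm _ _ (actE g), pairing_delta,
          hsymm g a]
    rw [hsets]

end DiGraph
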